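/- If η, a₁, a₂, τ₁, τ₂ > 0 satisfy ηa₁τ₁ + ηa₂τ₂ < 1, then the characteristic equation λ + ηa₁e^{-λτ₁} + ηa₂e^{-λτ₂} = 0 has no purely imaginary root λ = iω with ω real. -/
import Mathlib

open Complex

/-- If ηa₁τ₁ + ηa₂τ₂ < 1, the two-delay characteristic equation has no purely
imaginary root. -/
theorem no_imaginary_root_of_sufficient (η a₁ a₂ τ₁ τ₂ : ℝ) (hη : 0 < η)
    (ha₁ : 0 < a₁) (ha₂ : 0 < a₂) (hτ₁ : 0 < τ₁) (hτ₂ : 0 < τ₂)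
    (hcond : η * a₁ * τ₁ + η * a₂ * τ₂ < 1) :
    ∀ ω : ℝ, Complex.I * ω + (η * a₁ : ℂ) * Complex.exp (-(Complex.I * ω) * τ₁) +
      (η * a₂ : ℂ) * Complex.exp (-(Complex.I * ω) * τ₂) ≠ 0 := by
  intro ω h
  have key : ∀ τ : ℝ, -(Complex.I * ω) * τ = ((-(ω * τ) : ℝ)) * Complex.I := by
    intro τ; push_cast; ring
  rw [key τ₁, key τ₂] at h
  rw [← Complex.ofReal_mul η a₁, ← Complex.ofReal_mul η a₂] at h
  rcases eq_or_ne ω 0 with hω | hω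
  · subst hω
    simp only [Complex.ofReal_zero, mul_zero, zero_mul, Complex.ofReal_neg,
      neg_zero, Complex.exp_zero, mul_one, zero_add] at h
    have := congrArg Complex.re h
    simp only [Complex.add_re, Complex.ofReal_re, Complex.zero_re] at this
    nlinarith
  · have him := congrArg Complex.im h
    simp only [Complex.add_im, Complex.mul_im, Complex.I_re, Complex.I_im,
      Complex.ofReal_re, Complex.ofReal_im, Complex.exp_ofReal_mul_I_im,
      Complex.exp_ofReal_mul_I_re, Complex.zero_im] at him
    ring_nf at him
    -- him : ω + η*a₁ * sin(-(ω*τ₁)) + η*a₂ * sin(-(ω*τ₂)) = 0 (up to form)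
    have h1 : |Real.sin (ω * τ₁)| ≤ |ω * τ₁| := Real.abs_sin_le_abs
    have h2 : |Real.sin (ω * τ₂)| ≤ |ω * τ₂| := Real.abs_sin_le_abs
    have heq : ω = η * a₁ * Real.sin (ω * τ₁) + η * a₂ * Real.sin (ω * τ₂) := by
      rw [Real.sin_neg, Real.sin_neg] at him; linarith
    have habs : |ω| ≤ η * a₁ * |ω * τ₁| + η * a₂ * |ω * τ₂| := by
      calc |ω| = |η * a₁ * Real.sin (ω * τ₁) + η * a₂ * Real.sin (ω * τ₂)| := by
            rw [← heq]
        _ ≤ |η * a₁ * Real.sin (ω * τ₁)| + |η * a₂ * Real.sin (ω * τ₂)| := abs_add_le _ _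
        _ ≤ η * a₁ * |ω * τ₁| + η * a₂ * |ω * τ₂| := by
            have e1 : |η * a₁ * Real.sin (ω * τ₁)| = η * a₁ * |Real.sin (ω * τ₁)| := by
              rw [abs_mul, abs_of_pos (by positivity : (0:ℝ) < η * a₁)]
            have e2 : |η * a₂ * Real.sin (ω * τ₂)| = η * a₂ * |Real.sin (ω * τ₂)| := by
              rw [abs_mul, abs_of_pos (by positivity : (0:ℝ) < η * a₂)]
            rw [e1, e2]; gcongr
    have hτ1 : |ω * τ₁| = |ω| * τ₁ := by rw [abs_mul, abs_of_pos hτ₁]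
    have hτ2 : |ω * τ₂| = |ω| * τ₂ := by rw [abs_mul, abs_of_pos hτ₂]
    rw [hτ1, hτ2] at habs
    have hωpos : 0 < |ω| := abs_pos.mpr hω
    nlinarith
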